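/- Let φ : M(n,ℝ) → ℝ be φ(A) = tr(√(AᵀA)). If A is invertible, then φ is differentiable at A and its derivative is the linear map H ↦ ⟨A(√(AᵀA))⁻¹, H⟩ = tr((A(√(AᵀA))⁻¹)ᵀ H). -/

import Mathlib

open Matrix

attribute [local instance] Matrix.normedAddCommGroup Matrix.normedSpace

open scoped Classical in
/-- The unique positive semidefinite square root of a positive semidefinite real matrix
(junk value `0` on matrices that are not positive semidefinite). -/
noncomputable def psdSqrt {n : ℕ} (X : Matrix (Fin n) (Fin n) ℝ) : Matrix (Fin n) (Fin n) ℝ :=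
  if h : X.PosSemidef then
    (h.1.eigenvectorUnitary : Matrix (Fin n) (Fin n) ℝ) *
      diagonal ((↑) ∘ (fun x : ℝ => √x) ∘ h.1.eigenvalues) *
      (star h.1.eigenvectorUnitary : Matrix (Fin n) (Fin n) ℝ)
  else 0

/-- the square root of a positive semidefinite matrix (the positive branch of `psdSqrt`) -/
noncomputable def Matrix.PosSemidef.sqrt {n : ℕ} {X : Matrix (Fin n) (Fin n) ℝ}
    (h : X.PosSemidef) : Matrix (Fin n) (Fin n) ℝ :=
  (h.1.eigenvectorUnitary : Matrix (Fin n) (Fin n) ℝ) *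
    diagonal ((↑) ∘ (fun x : ℝ => √x) ∘ h.1.eigenvalues) *
    (star h.1.eigenvectorUnitary : Matrix (Fin n) (Fin n) ℝ)

lemma Matrix.PosSemidef.sqrt_eq_cfc {n : ℕ} {X : Matrix (Fin n) (Fin n) ℝ}
    (h : X.PosSemidef) : h.sqrt = cfc Real.sqrt X := by
  rw [h.1.cfc_eq, IsHermitian.cfc, Unitary.conjStarAlgAut_apply]
  rfl

lemma Matrix.PosSemidef.spectrum_nonneg' {n : ℕ} {X : Matrix (Fin n) (Fin n) ℝ}
    (h : X.PosSemidef) : ∀ x ∈ spectrum ℝ X, 0 ≤ x := by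
  intro x hx
  rw [h.1.spectrum_real_eq_range_eigenvalues] at hx
  obtain ⟨i, rfl⟩ := hx
  exact h.eigenvalues_nonneg i

lemma Matrix.PosSemidef.sqrt_mul_self {n : ℕ} {X : Matrix (Fin n) (Fin n) ℝ}
    (h : X.PosSemidef) : h.sqrt * h.sqrt = X := by
  have hX : IsSelfAdjoint X := h.1
  rw [h.sqrt_eq_cfc, ← cfc_mul Real.sqrt Real.sqrt X]
  conv_rhs => rw [← cfc_id ℝ X]
  exact cfc_congr fun x hx => Real.mul_self_sqrt (h.spectrum_nonneg' x hx)

lemma Matrix.PosSemidef.posSemidef_sqrt {n : ℕ} {X : Matrix (Fin n) (Fin n) ℝ}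
    (h : X.PosSemidef) : h.sqrt.PosSemidef := by
  have hd : (diagonal ((↑) ∘ (fun x : ℝ => √x) ∘ h.1.eigenvalues) :
      Matrix (Fin n) (Fin n) ℝ).PosSemidef :=
    posSemidef_diagonal_iff.mpr fun i => Real.sqrt_nonneg _
  have := hd.mul_mul_conjTranspose_same (h.1.eigenvectorUnitary : Matrix (Fin n) (Fin n) ℝ)
  rwa [← star_eq_conjTranspose] at this

lemma Matrix.PosSemidef.eq_sqrt_of_sq_eq {n : ℕ} {B X : Matrix (Fin n) (Fin n) ℝ}
    (hB : B.PosSemidef) (hX : X.PosSemidef) (hBX : B ^ 2 = X) : B = hX.sqrt := by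
  have hB' : IsSelfAdjoint B := hB.1
  rw [hX.sqrt_eq_cfc, ← hBX, ← cfc_pow_id (R := ℝ) B 2, ← cfc_comp Real.sqrt (fun x : ℝ => x ^ 2) B]
  conv_lhs => rw [← cfc_id ℝ B]
  exact (cfc_congr fun x hx => by
    simp [Real.sqrt_sq (hB.spectrum_nonneg' x hx)]).symm

namespace PsdSqrtAux

variable {n : ℕ}

local notation "Mat" => Matrix (Fin n) (Fin n) ℝ

lemma norm_mul_le' (A B : Mat) : ‖A * B‖ ≤ ((n : ℝ) + 1) * ‖A‖ * ‖B‖ := by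
  rw [Matrix.norm_le_iff (by positivity)]
  intro i j
  rw [Matrix.mul_apply]
  calc ‖∑ k, A i k * B k j‖ ≤ ∑ k, ‖A i k * B k j‖ := norm_sum_le _ _
    _ ≤ ∑ _k : Fin n, ‖A‖ * ‖B‖ := Finset.sum_le_sum fun k _ => by
        rw [norm_mul]
        exact mul_le_mul (Matrix.norm_entry_le_entrywise_sup_norm A)
          (Matrix.norm_entry_le_entrywise_sup_norm B) (norm_nonneg _) (norm_nonneg _)
    _ = (n : ℝ) * (‖A‖ * ‖B‖) := by
        simp [Finset.sum_const, Finset.card_univ, mul_assoc]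
    _ ≤ ((n : ℝ) + 1) * ‖A‖ * ‖B‖ := by nlinarith [norm_nonneg A, norm_nonneg B]

lemma mulBB : IsBoundedBilinearMap ℝ (fun p : Mat × Mat => p.1 * p.2) where
  add_left := fun x₁ x₂ y => add_mul x₁ x₂ y
  smul_left := fun c x y => smul_mul_assoc c x y
  add_right := fun x y₁ y₂ => mul_add x y₁ y₂
  smul_right := fun c x y => mul_smul_comm c x y
  bound := ⟨(n : ℝ) + 1, by positivity, norm_mul_le'⟩

/-- transpose as a continuous linear map -/
noncomputable def transposeCLM : Mat →L[ℝ] Mat :=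
  LinearMap.toContinuousLinearMap
    { toFun := fun X : Mat => Xᵀ
      map_add' := fun X Y => Matrix.transpose_add X Y
      map_smul' := fun c X => Matrix.transpose_smul c X }

@[simp] lemma transposeCLM_apply (X : Mat) : transposeCLM X = Xᵀ := rfl

/-- trace as a continuous linear map -/
noncomputable def traceCLM : Mat →L[ℝ] ℝ :=
  LinearMap.toContinuousLinearMap (Matrix.traceLinearMap (Fin n) ℝ ℝ)

@[simp] lemma traceCLM_apply (X : Mat) : traceCLM X = Matrix.trace X := rfl

lemma trace_transpose_mul_self_nonneg (X : Mat) : 0 ≤ Matrix.trace (Xᵀ * X) := by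
  rw [Matrix.trace]
  refine Finset.sum_nonneg fun j _ => ?_
  rw [Matrix.diag_apply, Matrix.mul_apply]
  exact Finset.sum_nonneg fun i _ => by
    simp only [Matrix.transpose_apply]
    exact mul_self_nonneg _

lemma eq_zero_of_trace_transpose_mul_self {X : Mat} (h : Matrix.trace (Xᵀ * X) = 0) :
    X = 0 := by
  have h' : ∑ j : Fin n, ∑ i : Fin n, X i j * X i j = 0 := by
    rw [← h, Matrix.trace]
    simp [Matrix.diag_apply, Matrix.mul_apply, Matrix.transpose_apply]
  ext i j
  have h1 : ∀ j ∈ Finset.univ (α := Fin n), 0 ≤ ∑ i : Fin n, X i j * X i j :=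
    fun j _ => Finset.sum_nonneg fun i _ => mul_self_nonneg _
  have h2 := (Finset.sum_eq_zero_iff_of_nonneg h1).1 h' j (Finset.mem_univ j)
  have h3 := (Finset.sum_eq_zero_iff_of_nonneg
    (fun i _ => mul_self_nonneg (X i j))).1 h2 i (Finset.mem_univ i)
  simpa [mul_self_eq_zero] using h3

lemma transpose_eq_of_isHermitian {B : Mat} (h : B.IsHermitian) : Bᵀ = B := by
  rw [← Matrix.conjTranspose_eq_transpose_of_trivial]; exact h

/-- the Sylvester operator H ↦ S H + H S as a linear map -/
def sylv (S : Mat) : Mat →ₗ[ℝ] Mat where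
  toFun H := S * H + H * S
  map_add' X Y := by noncomm_ring
  map_smul' c X := by
    simp only [RingHom.id_apply, Matrix.mul_smul, Matrix.smul_mul, smul_add]

@[simp] lemma sylv_apply (S H : Mat) : sylv S H = S * H + H * S := rfl

lemma isUnit_det_sqrt {S : Mat} (hS : S.PosDef) :
    IsUnit (hS.posSemidef.sqrt).det := by
  rw [isUnit_iff_ne_zero]
  intro h0
  have hm : hS.posSemidef.sqrt * hS.posSemidef.sqrt = S := hS.posSemidef.sqrt_mul_self
  have : S.det = 0 := by
    rw [← hm, Matrix.det_mul, h0, mul_zero]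
  exact absurd this (ne_of_gt hS.det_pos)

lemma eq_zero_of_unit_mul {R H : Mat} (hR : IsUnit R.det) (h : R * H = 0) : H = 0 := by
  have := congrArg (fun M => R⁻¹ * M) h
  simpa [← Matrix.mul_assoc, Matrix.nonsing_inv_mul R hR] using this

lemma sylv_injective {S : Mat} (hS : S.PosDef) : Function.Injective (sylv S) := by
  have hinj : ∀ H : Mat, sylv S H = 0 → H = 0 := by
    intro H h0
    set R := hS.posSemidef.sqrt with hRdef
    have hRR : R * R = S := hS.posSemidef.sqrt_mul_self
    have hRT : Rᵀ = R := transpose_eq_of_isHermitian hS.posSemidef.posSemidef_sqrt.1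
    have hRdet : IsUnit R.det := isUnit_det_sqrt hS
    have e1 : Matrix.trace ((R * H)ᵀ * (R * H)) = Matrix.trace (Hᵀ * (S * H)) := by
      rw [Matrix.transpose_mul, hRT, Matrix.mul_assoc Hᵀ R (R * H),
        ← Matrix.mul_assoc R R H, hRR]
    have e2 : Matrix.trace ((H * R)ᵀ * (H * R)) = Matrix.trace (Hᵀ * (H * S)) := by
      rw [Matrix.transpose_mul, hRT]
      calc Matrix.trace (Rᵀᵀ * Hᵀ * (H * R)) = Matrix.trace ((H * R) * (Rᵀᵀ * Hᵀ)) :=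
            Matrix.trace_mul_comm _ _
        _ = Matrix.trace ((H * S) * Hᵀ) := by
            rw [Matrix.transpose_transpose, Matrix.mul_assoc H R (R * Hᵀ),
              ← Matrix.mul_assoc R R Hᵀ, hRR, ← Matrix.mul_assoc H S Hᵀ]
        _ = Matrix.trace (Hᵀ * (H * S)) := Matrix.trace_mul_comm _ _
    have hsum : Matrix.trace ((R * H)ᵀ * (R * H)) + Matrix.trace ((H * R)ᵀ * (H * R)) = 0 := by
      rw [e1, e2, ← Matrix.trace_add, ← Matrix.mul_add,
        show S * H + H * S = 0 from h0, Matrix.mul_zero, Matrix.trace_zero]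
    have h1 := trace_transpose_mul_self_nonneg (R * H)
    have h2 := trace_transpose_mul_self_nonneg (H * R)
    have hRH : R * H = 0 := eq_zero_of_trace_transpose_mul_self (by linarith)
    exact eq_zero_of_unit_mul hRdet hRH
  intro X Y h
  have := hinj (X - Y) (by rw [map_sub, h, sub_self])
  exact sub_eq_zero.mp this

/-- the Sylvester operator as a continuous linear equivalence, for `S` positive definite -/
noncomputable def sylvEquiv {S : Mat} (hS : S.PosDef) : Mat ≃L[ℝ] Mat :=
  (LinearEquiv.ofBijective (sylv S)
    ⟨sylv_injective hS, LinearMap.injective_iff_surjective.mp (sylv_injective hS)⟩).toContinuousLinearEquiv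

@[simp] lemma sylvEquiv_apply {S : Mat} (hS : S.PosDef) (H : Mat) :
    sylvEquiv hS H = S * H + H * S := rfl

lemma dotProduct_self_nonneg (x : Fin n → ℝ) : 0 ≤ x ⬝ᵥ x :=
  Finset.sum_nonneg fun i _ => mul_self_nonneg _

lemma dotProduct_self_pos {x : Fin n → ℝ} (hx : x ≠ 0) : 0 < x ⬝ᵥ x := by
  obtain ⟨i, hi⟩ := Function.ne_iff.mp hx
  exact Finset.sum_pos' (fun j _ => mul_self_nonneg _)
    ⟨i, Finset.mem_univ i, mul_self_pos.mpr (by simpa using hi)⟩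

lemma quadform_le (M : Mat) (x : Fin n → ℝ) :
    (M *ᵥ x) ⬝ᵥ (M *ᵥ x) ≤ (∑ i, ∑ j, (M i j) ^ 2) * (x ⬝ᵥ x) := by
  have hx2 : x ⬝ᵥ x = ∑ j, (x j) ^ 2 := by
    simp [dotProduct, sq]
  calc (M *ᵥ x) ⬝ᵥ (M *ᵥ x) = ∑ i, (∑ j, M i j * x j) ^ 2 := by
        simp [dotProduct, Matrix.mulVec, sq]
    _ ≤ ∑ i, (∑ j, (M i j) ^ 2) * (∑ j, (x j) ^ 2) :=
        Finset.sum_le_sum fun i _ => Finset.sum_mul_sq_le_sq_mul_sq _ _ _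
    _ = (∑ i, ∑ j, (M i j) ^ 2) * (x ⬝ᵥ x) := by
        rw [hx2, Finset.sum_mul]

lemma abs_quadform_le (M : Mat) (x : Fin n → ℝ) :
    |x ⬝ᵥ (M *ᵥ x)| ≤ ((n : ℝ) ^ 2 * ‖M‖) * (x ⬝ᵥ x) := by
  have hxx : ∀ i j : Fin n, |x i| * |x j| ≤ x ⬝ᵥ x := by
    intro i j
    have hi : (x i) ^ 2 ≤ x ⬝ᵥ x := by
      have := Finset.single_le_sum (f := fun k => x k * x k)
        (fun k _ => mul_self_nonneg _) (Finset.mem_univ i)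
      simpa [dotProduct, sq] using this
    have hj : (x j) ^ 2 ≤ x ⬝ᵥ x := by
      have := Finset.single_le_sum (f := fun k => x k * x k)
        (fun k _ => mul_self_nonneg _) (Finset.mem_univ j)
      simpa [dotProduct, sq] using this
    nlinarith [sq_abs (x i), sq_abs (x j), abs_nonneg (x i), abs_nonneg (x j),
      sq_nonneg (|x i| - |x j|)]
  have h1 : |x ⬝ᵥ (M *ᵥ x)| ≤ ∑ i, ∑ j, |M i j| * (x ⬝ᵥ x) := by
    calc |x ⬝ᵥ (M *ᵥ x)| = |∑ i, ∑ j, x i * (M i j * x j)| := by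
          simp [dotProduct, Matrix.mulVec, Finset.mul_sum]
      _ ≤ ∑ i, |∑ j, x i * (M i j * x j)| := Finset.abs_sum_le_sum_abs _ _
      _ ≤ ∑ i, ∑ j, |x i * (M i j * x j)| :=
          Finset.sum_le_sum fun i _ => Finset.abs_sum_le_sum_abs _ _
      _ ≤ ∑ i, ∑ j, |M i j| * (x ⬝ᵥ x) := by
          refine Finset.sum_le_sum fun i _ => Finset.sum_le_sum fun j _ => ?_
          rw [abs_mul, abs_mul]
          calc |x i| * (|M i j| * |x j|) = |M i j| * (|x i| * |x j|) := by ring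
            _ ≤ |M i j| * (x ⬝ᵥ x) :=
                mul_le_mul_of_nonneg_left (hxx i j) (abs_nonneg _)
  calc |x ⬝ᵥ (M *ᵥ x)| ≤ ∑ i, ∑ j, |M i j| * (x ⬝ᵥ x) := h1
    _ ≤ ∑ _i : Fin n, ∑ _j : Fin n, ‖M‖ * (x ⬝ᵥ x) := by
        refine Finset.sum_le_sum fun i _ => Finset.sum_le_sum fun j _ => ?_
        exact mul_le_mul_of_nonneg_right (Matrix.norm_entry_le_entrywise_sup_norm M)
          (dotProduct_self_nonneg x)
    _ = ((n : ℝ) ^ 2 * ‖M‖) * (x ⬝ᵥ x) := by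
        simp [Finset.sum_const, Finset.card_univ, sq]
        ring

lemma exists_pos_quadform_lb {P : Mat} (hP : P.PosDef) :
    ∃ c > (0 : ℝ), ∀ x : Fin n → ℝ, c * (x ⬝ᵥ x) ≤ x ⬝ᵥ (P *ᵥ x) := by
  set R := hP.posSemidef.sqrt with hRdef
  have hRR : R * R = P := hP.posSemidef.sqrt_mul_self
  have hRT : Rᵀ = R := transpose_eq_of_isHermitian hP.posSemidef.posSemidef_sqrt.1
  have hRdet : IsUnit R.det := isUnit_det_sqrt hP
  set K : ℝ := ∑ i, ∑ j, (R⁻¹ i j) ^ 2 with hK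
  have hKnn : 0 ≤ K := Finset.sum_nonneg fun i _ => Finset.sum_nonneg fun j _ => sq_nonneg _
  refine ⟨1 / (K + 1), by positivity, fun x => ?_⟩
  set y := R *ᵥ x with hy
  have hxy : x = R⁻¹ *ᵥ y := by
    rw [hy, Matrix.mulVec_mulVec, Matrix.nonsing_inv_mul R hRdet, Matrix.one_mulVec]
  have h1 : x ⬝ᵥ x ≤ K * (y ⬝ᵥ y) := by
    calc x ⬝ᵥ x = (R⁻¹ *ᵥ y) ⬝ᵥ (R⁻¹ *ᵥ y) := by rw [← hxy]
      _ ≤ K * (y ⬝ᵥ y) := quadform_le R⁻¹ y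
  have h2 : y ⬝ᵥ y = x ⬝ᵥ (P *ᵥ x) := by
    rw [hy, Matrix.dotProduct_mulVec, ← Matrix.mulVec_transpose, hRT]
    rw [Matrix.mulVec_mulVec, hRR, dotProduct_comm]
  rw [← h2]
  have h3 : x ⬝ᵥ x ≤ (K + 1) * (y ⬝ᵥ y) := by nlinarith [dotProduct_self_nonneg y]
  have hpos : (0 : ℝ) < K + 1 := by positivity
  rw [div_mul_eq_mul_div, div_le_iff₀ hpos]
  nlinarith

lemma posDef_of_near {P : Mat} (hP : P.PosDef) :
    ∃ δ > (0 : ℝ), ∀ B : Mat, Bᵀ = B → ‖B - P‖ < δ → B.PosDef := by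
  obtain ⟨c, hc, hlb⟩ := exists_pos_quadform_lb hP
  refine ⟨c / ((n : ℝ) ^ 2 + 1), by positivity, fun B hBsym hBnear => ?_⟩
  refine PosDef.of_dotProduct_mulVec_pos ?_ ?_
  · rw [Matrix.IsHermitian, Matrix.conjTranspose_eq_transpose_of_trivial]
    exact hBsym
  · intro x hx
    have hxx : 0 < x ⬝ᵥ x := dotProduct_self_pos hx
    have habs := abs_quadform_le (B - P) x
    have hBP : x ⬝ᵥ (B *ᵥ x) = x ⬝ᵥ (P *ᵥ x) + x ⬝ᵥ ((B - P) *ᵥ x) := by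
      rw [← dotProduct_add, ← Matrix.add_mulVec]
      norm_num
    have hlbx := hlb x
    have hnorm : ((n : ℝ) ^ 2 * ‖B - P‖) * (x ⬝ᵥ x) < c * (x ⬝ᵥ x) := by
      have hn2 : (0 : ℝ) ≤ (n : ℝ) ^ 2 := sq_nonneg _
      have h1 : (n : ℝ) ^ 2 * ‖B - P‖ < c := by
        have h2 : ((n : ℝ) ^ 2 + 1) * ‖B - P‖ < c := by
          have := (lt_div_iff₀ (show (0:ℝ) < (n:ℝ)^2 + 1 by positivity)).mp hBnear
          linarith [mul_comm (((n : ℝ) ^ 2 + 1)) ‖B - P‖]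
        nlinarith [norm_nonneg (B - P)]
      exact mul_lt_mul_of_pos_right h1 hxx
    have : |x ⬝ᵥ ((B - P) *ᵥ x)| < c * (x ⬝ᵥ x) := lt_of_le_of_lt habs hnorm
    have habs' := abs_lt.mp this
    have : (0 : ℝ) < x ⬝ᵥ (B *ᵥ x) := by rw [hBP]; linarith
    simpa using this

lemma posDef_of_posSemidef_isUnit {P : Mat} (hP : P.PosSemidef) (h : IsUnit P.det) :
    P.PosDef := by
  refine PosDef.of_dotProduct_mulVec_pos hP.1 fun x hx => ?_
  rcases lt_or_eq_of_le (hP.dotProduct_mulVec_nonneg x) with hlt | heq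
  · exact hlt
  · exfalso
    have h0 : P *ᵥ x = 0 := (hP.dotProduct_mulVec_zero_iff x).mp heq.symm
    have : x = 0 := by
      have := congrArg (fun v => P⁻¹ *ᵥ v) h0
      simpa [Matrix.mulVec_mulVec, Matrix.nonsing_inv_mul P h, Matrix.one_mulVec] using this
    exact hx this

lemma posDef_transpose_mul_self {A : Mat} (hA : IsUnit A.det) : (Aᵀ * A).PosDef := by
  refine PosDef.of_dotProduct_mulVec_pos ?_ ?_
  · rw [Matrix.IsHermitian, Matrix.conjTranspose_eq_transpose_of_trivial,
      Matrix.transpose_mul, Matrix.transpose_transpose]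
  · intro x hx
    have hAx : A *ᵥ x ≠ 0 := by
      intro h0
      have := congrArg (fun v => A⁻¹ *ᵥ v) h0
      simp [Matrix.mulVec_mulVec, Matrix.nonsing_inv_mul A hA, Matrix.one_mulVec] at this
      exact hx this
    have : x ⬝ᵥ ((Aᵀ * A) *ᵥ x) = (A *ᵥ x) ⬝ᵥ (A *ᵥ x) := by
      rw [← Matrix.mulVec_mulVec, Matrix.dotProduct_mulVec, ← Matrix.mulVec_transpose,
        Matrix.transpose_transpose]
    have hpos : 0 < (A *ᵥ x) ⬝ᵥ (A *ᵥ x) := dotProduct_self_pos hAx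
    simpa [this] using hpos

end PsdSqrtAux

open PsdSqrtAux in
/-- Let φ(A) = tr(√(AᵀA)).  If A is invertible, then φ is differentiable at A and
its derivative is the linear map H ↦ ⟨A(√(AᵀA))⁻¹, H⟩ = tr((A(√(AᵀA))⁻¹)ᵀ H). -/
theorem deriv_trace_sqrt_at_invertible {n : ℕ} (A : Matrix (Fin n) (Fin n) ℝ)
    (hA : IsUnit A.det) :
    ∃ L : Matrix (Fin n) (Fin n) ℝ →L[ℝ] ℝ,
      HasFDerivAt (fun X : Matrix (Fin n) (Fin n) ℝ => Matrix.trace (psdSqrt (Xᵀ * X))) L A ∧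
      ∀ H : Matrix (Fin n) (Fin n) ℝ,
        L H = Matrix.trace ((A * (psdSqrt (Aᵀ * A))⁻¹)ᵀ * H) := by
  classical
  have hSpd : (Aᵀ * A).PosDef := posDef_transpose_mul_self hA
  have hS : (Aᵀ * A).PosSemidef := hSpd.posSemidef
  set P : Matrix (Fin n) (Fin n) ℝ := hS.sqrt with hPdef
  have hPsd : P.PosSemidef := hS.posSemidef_sqrt
  have hPP : P * P = Aᵀ * A := hS.sqrt_mul_self
  have hPT : Pᵀ = P := transpose_eq_of_isHermitian hPsd.1
  have hPdet : IsUnit P.det := isUnit_det_sqrt hSpd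
  have hPpd : P.PosDef := posDef_of_posSemidef_isUnit hPsd hPdet
  set e := sylvEquiv hPpd with hedef
  -- strict derivative of the squaring map at P
  have hsq : HasStrictFDerivAt (fun X : Matrix (Fin n) (Fin n) ℝ => X * X)
      (e : Matrix (Fin n) (Fin n) ℝ →L[ℝ] Matrix (Fin n) (Fin n) ℝ) P := by
    have h1 := (mulBB (n := n)).hasStrictFDerivAt (P, P)
    have h2 : HasStrictFDerivAt (fun X : Matrix (Fin n) (Fin n) ℝ => (X, X))
        ((ContinuousLinearMap.id ℝ _).prod (ContinuousLinearMap.id ℝ _)) P :=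
      ((ContinuousLinearMap.id ℝ _).hasStrictFDerivAt).prodMk
        ((ContinuousLinearMap.id ℝ _).hasStrictFDerivAt)
    have h3 := h1.comp (f := fun X : Matrix (Fin n) (Fin n) ℝ => (X, X)) P h2
    have h4 : (e : Matrix (Fin n) (Fin n) ℝ →L[ℝ] Matrix (Fin n) (Fin n) ℝ)
        = ((mulBB (n := n)).deriv (P, P)).comp
            ((ContinuousLinearMap.id ℝ _).prod (ContinuousLinearMap.id ℝ _)) := by
      ext H
      rfl
    rw [h4]
    exact h3
  set g := hsq.localInverse _ _ _ with hgdef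
  have hg_strict : HasStrictFDerivAt g
      ((e.symm : Matrix (Fin n) (Fin n) ℝ →L[ℝ] Matrix (Fin n) (Fin n) ℝ)) (Aᵀ * A) := by
    have := hsq.to_localInverse
    rwa [hPP] at this
  -- derivative of X ↦ Xᵀ * X
  set D : Matrix (Fin n) (Fin n) ℝ →L[ℝ] Matrix (Fin n) (Fin n) ℝ :=
    ((mulBB (n := n)).deriv (Aᵀ, A)).comp (transposeCLM.prod (ContinuousLinearMap.id ℝ _))
    with hDdef
  have hmul2 : HasStrictFDerivAt (fun X : Matrix (Fin n) (Fin n) ℝ => Xᵀ * X) D A := by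
    have h1 := (mulBB (n := n)).hasStrictFDerivAt (Aᵀ, A)
    have h2 : HasStrictFDerivAt (fun X : Matrix (Fin n) (Fin n) ℝ => (Xᵀ, X))
        (transposeCLM.prod (ContinuousLinearMap.id ℝ _)) A :=
      (transposeCLM.hasStrictFDerivAt).prodMk ((ContinuousLinearMap.id ℝ _).hasStrictFDerivAt)
    exact h1.comp (f := fun X : Matrix (Fin n) (Fin n) ℝ => (Xᵀ, X)) A h2
  have hcomp : HasFDerivAt (fun X : Matrix (Fin n) (Fin n) ℝ => g (Xᵀ * X))
      (((e.symm : Matrix (Fin n) (Fin n) ℝ →L[ℝ] Matrix (Fin n) (Fin n) ℝ)).comp D) A :=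
    hg_strict.hasFDerivAt.comp (f := fun X : Matrix (Fin n) (Fin n) ℝ => Xᵀ * X) A hmul2.hasFDerivAt
  have hψ : HasFDerivAt (fun X : Matrix (Fin n) (Fin n) ℝ => traceCLM (g (Xᵀ * X)))
      (traceCLM.comp
        (((e.symm : Matrix (Fin n) (Fin n) ℝ →L[ℝ] Matrix (Fin n) (Fin n) ℝ)).comp D)) A :=
    (traceCLM.hasFDerivAt).comp A hcomp
  -- continuity facts
  have hgc : ContinuousAt g (Aᵀ * A) := hg_strict.continuousAt
  have hgP : g (Aᵀ * A) = P := by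
    have := hsq.localInverse_apply_image
    rwa [hPP] at this
  obtain ⟨s, hsmem, hs⟩ := Filter.eventually_iff_exists_mem.mp hsq.eventually_left_inverse
  obtain ⟨δ, hδ, hδP⟩ := posDef_of_near hPpd
  have Ev1 : ∀ᶠ Y in nhds (Aᵀ * A), g Y * g Y = Y := by
    have := hsq.eventually_right_inverse
    rwa [hPP] at this
  have Ev2 : ∀ᶠ Y in nhds (Aᵀ * A), g Y ∈ s :=
    hgc.eventually_mem (by rw [hgP]; exact hsmem)
  have Ev3 : ∀ᶠ Y in nhds (Aᵀ * A), (g Y)ᵀ ∈ s := by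
    have hc2 : ContinuousAt (fun Y : Matrix (Fin n) (Fin n) ℝ => (g Y)ᵀ) (Aᵀ * A) :=
      (transposeCLM.continuous.continuousAt).comp hgc
    exact hc2.eventually_mem (by show s ∈ nhds ((g (Aᵀ * A))ᵀ); rw [hgP, hPT]; exact hsmem)
  have Ev4 : ∀ᶠ Y in nhds (Aᵀ * A), ‖g Y - P‖ < δ := by
    have hball : Metric.ball P δ ∈ nhds (g (Aᵀ * A)) := by
      rw [hgP]; exact Metric.ball_mem_nhds _ hδ
    filter_upwards [hgc.eventually_mem hball] with Y hY
    simpa [Metric.mem_ball, dist_eq_norm] using hY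
  have hkey : ∀ᶠ Y in nhds (Aᵀ * A), (Yᵀ = Y → psdSqrt Y = g Y) := by
    filter_upwards [Ev1, Ev2, Ev3, Ev4] with Y h1 h2 h3 h4 hYsym
    have hu2 : g Y * g Y = Y := h1
    have hut2 : (g Y)ᵀ * (g Y)ᵀ = Y := by
      calc (g Y)ᵀ * (g Y)ᵀ = (g Y * g Y)ᵀ := (Matrix.transpose_mul _ _).symm
        _ = Y := by rw [hu2, hYsym]
    have husym : (g Y)ᵀ = g Y := by
      have h5 : g ((g Y)ᵀ * (g Y)ᵀ) = (g Y)ᵀ := hs _ h3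
      rw [hut2] at h5
      exact h5.symm
    have hupd : (g Y).PosDef := hδP _ husym h4
    have hYpsd : Y.PosSemidef := by
      have hps := Matrix.posSemidef_conjTranspose_mul_self (g Y)
      rw [Matrix.conjTranspose_eq_transpose_of_trivial, husym, hu2] at hps
      exact hps
    have hgY : g Y = hYpsd.sqrt :=
      hupd.posSemidef.eq_sqrt_of_sq_eq hYpsd (by rw [pow_two]; exact hu2)
    simp only [psdSqrt, dif_pos hYpsd]
    exact hgY.symm
  have hmc : ContinuousAt (fun X : Matrix (Fin n) (Fin n) ℝ => Xᵀ * X) A :=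
    hmul2.hasFDerivAt.continuousAt
  have hfin : (fun X : Matrix (Fin n) (Fin n) ℝ => Matrix.trace (psdSqrt (Xᵀ * X)))
      =ᶠ[nhds A] (fun X : Matrix (Fin n) (Fin n) ℝ => traceCLM (g (Xᵀ * X))) := by
    filter_upwards [hmc.tendsto.eventually hkey] with X hX
    have hXsym : (Xᵀ * X)ᵀ = Xᵀ * X := by
      rw [Matrix.transpose_mul, Matrix.transpose_transpose]
    have := hX hXsym
    simp [traceCLM_apply, this]
  refine ⟨traceCLM.comp
      (((e.symm : Matrix (Fin n) (Fin n) ℝ →L[ℝ] Matrix (Fin n) (Fin n) ℝ)).comp D),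
    hψ.congr_of_eventuallyEq hfin, ?_⟩
  intro H
  have hps : psdSqrt (Aᵀ * A) = P := by simp only [psdSqrt, dif_pos hS]; rfl
  have hDH : D H = Aᵀ * H + Hᵀ * A := by
    rfl
  set K : Matrix (Fin n) (Fin n) ℝ := e.symm (Aᵀ * H + Hᵀ * A) with hKdef
  have hK : P * K + K * P = Aᵀ * H + Hᵀ * A := by
    exact e.apply_symm_apply (Aᵀ * H + Hᵀ * A)
  have htr : Matrix.trace (P⁻¹ * (Aᵀ * H + Hᵀ * A)) = 2 * Matrix.trace K := by
    rw [← hK, Matrix.mul_add, Matrix.trace_add, ← Matrix.mul_assoc,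
      Matrix.nonsing_inv_mul P hPdet, Matrix.one_mul,
      Matrix.trace_mul_comm P⁻¹ (K * P), Matrix.mul_assoc,
      Matrix.mul_nonsing_inv P hPdet, Matrix.mul_one]
    ring
  have hswap : Matrix.trace (P⁻¹ * (Hᵀ * A)) = Matrix.trace (P⁻¹ * (Aᵀ * H)) := by
    have h7 : (P⁻¹ * (Hᵀ * A))ᵀ = Aᵀ * H * P⁻¹ := by
      rw [Matrix.transpose_mul, Matrix.transpose_mul, Matrix.transpose_transpose,
        Matrix.transpose_nonsing_inv, hPT, Matrix.mul_assoc]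
    calc Matrix.trace (P⁻¹ * (Hᵀ * A)) = Matrix.trace ((P⁻¹ * (Hᵀ * A))ᵀ) :=
          (Matrix.trace_transpose _).symm
      _ = Matrix.trace (Aᵀ * H * P⁻¹) := by rw [h7]
      _ = Matrix.trace (P⁻¹ * (Aᵀ * H)) := Matrix.trace_mul_comm _ _
  have hexp : Matrix.trace (P⁻¹ * (Aᵀ * H + Hᵀ * A))
      = Matrix.trace (P⁻¹ * (Aᵀ * H)) + Matrix.trace (P⁻¹ * (Hᵀ * A)) := by
    rw [Matrix.mul_add, Matrix.trace_add]
  have hLH : (traceCLM.comp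
      (((e.symm : Matrix (Fin n) (Fin n) ℝ →L[ℝ] Matrix (Fin n) (Fin n) ℝ)).comp D)) H
      = Matrix.trace K := by
    simp [hDH, hKdef]
  rw [hLH, hps]
  have hTgt : (A * P⁻¹)ᵀ * H = P⁻¹ * (Aᵀ * H) := by
    rw [Matrix.transpose_mul, Matrix.transpose_nonsing_inv, hPT, Matrix.mul_assoc]
  rw [hTgt]
  linarith [htr, hswap, hexp]
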